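/- Let P ⊆ ℝ² be an ℝ-Δ₂-free polygon with rational diameter l = 1 + 2a > 1 (i.e. a > 0) achieved by the horizontal segment S = conv{(−a, 0), (1 + a, 0)} ⊆ P; that is, P contains S, and P contains no translate of a segment conv{p, p + l'·w} with w a primitive vector of ℤ² and l' > l. Then the interior of P is disjoint from every segment conv{(b − a, ε), (b + a, ε)} with b ∈ ℤ and ε ∈ {1, −1}. In particular, if a ≥ 1/2, then P ⊆ {(x, y) ∈ ℝ² : −1 ≤ y ≤ 1} and the lattice width of P is at most 2. -/

import Mathlib

open Set Pointwise

noncomputable section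

/-- The set of real numbers that are integers (the ring ℤ viewed inside ℝ). -/
def ZSet : Set ℝ := Set.range (fun z : ℤ => (z : ℝ))

/-- `T : ℝ^d → ℝ^d` is an affine `A`-unimodular transformation: `T x = M x + b` with
`M` an integer matrix of determinant `±1` and `b ∈ A^d`. -/
def IsUnimodularMap {d : ℕ} (A : Set ℝ) (T : (Fin d → ℝ) → (Fin d → ℝ)) : Prop :=
  ∃ (M : Matrix (Fin d) (Fin d) ℤ) (b : Fin d → ℝ),
    (M.det = 1 ∨ M.det = -1) ∧ (∀ i, b i ∈ A) ∧
    ∀ x, T x = (M.map (fun z : ℤ => (z : ℝ))).mulVec x + b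

/-- `Y` is an `A`-unimodular copy of `X`. -/
def IsUnimodCopy {d : ℕ} (A : Set ℝ) (X Y : Set (Fin d → ℝ)) : Prop :=
  ∃ T, IsUnimodularMap A T ∧ Y = T '' X

/-- `K` contains an `A`-unimodular copy of `X`. -/
def ContainsCopy {d : ℕ} (A : Set ℝ) (X K : Set (Fin d → ℝ)) : Prop :=
  ∃ Y, IsUnimodCopy A X Y ∧ Y ⊆ K

/-- `K` is `A`-`X`-free: its relative interior contains no `A`-unimodular copy of `X`. -/
def IsFree {d : ℕ} (A : Set ℝ) (X K : Set (Fin d → ℝ)) : Prop :=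
  ∀ Y, IsUnimodCopy A X Y → ¬ Y ⊆ intrinsicInterior ℝ K

/-- A convex body: a nonempty compact convex set. -/
def IsConvexBody {d : ℕ} (K : Set (Fin d → ℝ)) : Prop :=
  Convex ℝ K ∧ IsCompact K ∧ K.Nonempty

/-- A polytope: the convex hull of a finite set of points. -/
def IsPolytope {d : ℕ} (K : Set (Fin d → ℝ)) : Prop :=
  ∃ F : Set (Fin d → ℝ), F.Finite ∧ K = convexHull ℝ F

/-- The width of `K` along the integer linear functional `u`. -/
def widthAlong {d : ℕ} (u : Fin d → ℤ) (K : Set (Fin d → ℝ)) : ℝ :=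
  sSup {w | ∃ x ∈ K, ∃ y ∈ K, w = |(∑ i, (u i : ℝ) * x i) - ∑ i, (u i : ℝ) * y i|}

/-- The lattice width of `K`: the infimum of its widths along nonzero integer functionals. -/
def latticeWidth {d : ℕ} (K : Set (Fin d → ℝ)) : ℝ :=
  sInf {w | ∃ u : Fin d → ℤ, u ≠ 0 ∧ w = widthAlong u K}

/-- The generalised flatness constant `Flt_d^A(X)`: the supremum of the lattice widths of all
convex bodies containing no `A`-unimodular copy of `X`. -/
def Flt (d : ℕ) (A : Set ℝ) (X : Set (Fin d → ℝ)) : ℝ :=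
  sSup {w | ∃ K : Set (Fin d → ℝ), IsConvexBody K ∧ ¬ ContainsCopy A X K ∧ w = latticeWidth K}

/-- The affine dimension of a set: the dimension of the direction of its affine span. -/
def affDim {d : ℕ} (s : Set (Fin d → ℝ)) : ℕ :=
  Module.finrank ℝ (affineSpan ℝ s).direction

/-- Minkowski difference `K ÷ S = {x | S + x ⊆ K}`. -/
def mDiff {d : ℕ} (K S : Set (Fin d → ℝ)) : Set (Fin d → ℝ) :=
  {x | ∀ s ∈ S, s + x ∈ K}

/-- The standard triangle `Δ₂ = conv{(0,0), (1,0), (0,1)} ⊆ ℝ²`. -/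
def stdSimplex2 : Set (Fin 2 → ℝ) := convexHull ℝ {![0, 0], ![1, 0], ![0, 1]}

lemma memSeg (a v : ℝ) (ha : 0 < a) (h1 : -a ≤ v) (h2 : v ≤ 1 + a) :
    ![v, (0:ℝ)] ∈ convexHull ℝ ({![-a, 0], ![1 + a, 0]} : Set (Fin 2 → ℝ)) := by
  rw [convexHull_pair]
  have hd : (0:ℝ) < 1 + 2*a := by linarith
  refine ⟨(1+a-v)/(1+2*a), (v+a)/(1+2*a), div_nonneg (by linarith) hd.le,
    div_nonneg (by linarith) hd.le, ?_, ?_⟩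
  · rw [← add_div, div_eq_one_iff_eq hd.ne']; ring
  · funext i
    fin_cases i <;>
      simp [Matrix.cons_val_zero, Matrix.cons_val_one] <;> field_simp <;> ring

lemma unimodTriangle (b e : ℤ) (he : e = 1 ∨ e = -1) (t hh ε : ℝ) (hee : (e:ℝ) = ε) :
    IsUnimodCopy (Set.univ : Set ℝ) stdSimplex2
      (convexHull ℝ ({![t, ε*hh], ![t+1, ε*hh], ![t+(b:ℝ), ε*(hh+1)]} : Set (Fin 2 → ℝ))) := by
  set M : Matrix (Fin 2) (Fin 2) ℤ := !![1, b; 0, e] with hM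
  set T : (Fin 2 → ℝ) → (Fin 2 → ℝ) :=
    fun z => (M.map (fun z : ℤ => (z : ℝ))).mulVec z + ![t, ε*hh] with hT
  have hdet : M.det = 1 ∨ M.det = -1 := by
    rcases he with rfl | rfl <;> simp [hM, Matrix.det_fin_two_of]
  refine ⟨T, ⟨M, ![t, ε*hh], hdet, fun i => mem_univ _, fun x => rfl⟩, ?_⟩
  let f : (Fin 2 → ℝ) →ᵃ[ℝ] (Fin 2 → ℝ) :=
    { toFun := T
      linear := Matrix.mulVecLin (M.map (fun z : ℤ => (z : ℝ)))
      map_vadd' := fun p' v => by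
        show T (v + p') = _
        simp only [hT, Matrix.mulVec_add, Matrix.mulVecLin_apply, vadd_eq_add]
        abel }
  have himg : T '' stdSimplex2 = convexHull ℝ (T '' {![0, 0], ![1, 0], ![0, 1]}) := by
    rw [stdSimplex2]
    exact f.image_convexHull _
  rw [himg, Set.image_insert_eq, Set.image_insert_eq, Set.image_singleton]
  have h0 : T ![0, 0] = ![t, ε*hh] := by
    funext i; fin_cases i <;>
      simp [hT, hM, Matrix.mulVec, dotProduct, Fin.sum_univ_two, Matrix.vecHead, Matrix.vecTail]
  have h1 : T ![1, 0] = ![t+1, ε*hh] := by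
    funext i; fin_cases i <;>
      simp [hT, hM, Matrix.mulVec, dotProduct, Fin.sum_univ_two, Matrix.vecHead, Matrix.vecTail] <;> ring
  have h2 : T ![0, 1] = ![t+(b:ℝ), ε*(hh+1)] := by
    funext i; fin_cases i <;>
      simp [hT, hM, Matrix.mulVec, dotProduct, Fin.sum_univ_two, Matrix.vecHead, Matrix.vecTail, hee] <;> ring
  rw [h0, h1, h2]

set_option maxHeartbeats 2000000 in
lemma key_lemma (P : Set (Fin 2 → ℝ)) (hP : Convex ℝ P)
    (hfree : IsFree Set.univ stdSimplex2 P)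
    (a : ℝ) (ha : 0 < a)
    (hS : convexHull ℝ ({![-a, 0], ![1 + a, 0]} : Set (Fin 2 → ℝ)) ⊆ P)
    (b : ℤ) (e : ℤ) (he : e = 1 ∨ e = -1) (ε : ℝ) (hee : (e:ℝ) = ε)
    (q : Fin 2 → ℝ) (hq0l : (b:ℝ) - a ≤ q 0) (hq0r : q 0 ≤ (b:ℝ) + a) (hq1 : q 1 = ε)
    (hq : q ∈ interior P) : False := by
  set x := q 0 with hx
  have hεabs : |ε| = 1 := by
    rcases he with rfl | rfl <;> rw [← hee] <;> norm_num
  -- a ball around q inside the interior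
  obtain ⟨δ₀, hδ₀pos, hball₀⟩ := Metric.mem_nhds_iff.mp (isOpen_interior.mem_nhds hq)
  set δ : ℝ := min δ₀ 1 with hδ
  clear_value δ
  have hδpos : 0 < δ := by rw [hδ]; exact lt_min hδ₀pos one_pos
  have hδ1 : δ ≤ 1 := by rw [hδ]; exact min_le_right _ _
  have hball : Metric.ball q δ ⊆ interior P := by
    rw [hδ]; exact (Metric.ball_subset_ball (min_le_left _ _)).trans hball₀
  set B : ℝ := |(b:ℝ)| + 1 with hB
  clear_value B
  have hBpos : (0:ℝ) < B := by rw [hB]; positivity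
  set δ' : ℝ := δ / (2*B) with hδ'
  clear_value δ'
  have hδ'pos : 0 < δ' := by rw [hδ']; positivity
  have hδ'B : δ' * B = δ/2 := by rw [hδ']; field_simp
  have hδ'le : δ' ≤ δ/2 := by
    rw [← hδ'B]; nlinarith [abs_nonneg (b:ℝ)]
  have hδ'1 : δ' ≤ 1 := by linarith
  set y₀ : ℝ := min (a/2) (δ'/4) with hy₀
  clear_value y₀
  have hy₀pos : 0 < y₀ := by rw [hy₀]; exact lt_min (by linarith) (by linarith)
  have hy₀a : 2*y₀ ≤ a := by have h := min_le_left (a/2) (δ'/4); rw [← hy₀] at h; linarith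
  have hy₀δ : y₀ ≤ δ'/4 := by rw [hy₀]; exact min_le_right _ _
  have hy₀half : y₀ ≤ 1/2 := by linarith
  have h1y : (0:ℝ) < 1 - y₀ := by linarith
  set v₁ : ℝ := min (x - b) (a - 2*y₀) with hv₁
  clear_value v₁
  have hv₁l : -a ≤ v₁ := by rw [hv₁]; exact le_min (by linarith) (by linarith)
  have hv₁r : v₁ ≤ a - 2*y₀ := by rw [hv₁]; exact min_le_right _ _
  have hv₁x : v₁ ≤ x - b := by rw [hv₁]; exact min_le_left _ _
  have hv₁x' : x - b - 2*y₀ ≤ v₁ := by rw [hv₁]; exact le_min (by linarith) (by linarith)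
  set v₂ : ℝ := v₁ + 1/(1-y₀) with hv₂def
  clear_value v₂
  have hinv : 1/(1-y₀) ≤ 1 + 2*y₀ := by
    rw [div_le_iff₀ h1y]; nlinarith
  have hinvpos : 0 < 1/(1-y₀) := by positivity
  have hv₂r : v₂ ≤ 1 + a := by rw [hv₂def]; linarith
  have hv₂l : -a ≤ v₂ := by rw [hv₂def]; linarith
  set x₁ : ℝ := v₁ + (b:ℝ)*(1+δ') with hx₁def
  clear_value x₁
  have hbabs : (b:ℝ)*δ' ≤ |(b:ℝ)| * δ' := mul_le_mul_of_nonneg_right (le_abs_self _) hδ'pos.le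
  have hbabs' : -(|(b:ℝ)| * δ') ≤ (b:ℝ)*δ' := by
    have h := mul_le_mul_of_nonneg_right (neg_abs_le (b:ℝ)) hδ'pos.le
    linarith [h]
  have habsb : |(b:ℝ)| * δ' = δ/2 - δ' := by
    have h : δ' * B = δ' * |(b:ℝ)| + δ' := by rw [hB]; ring
    have h2 : δ' * |(b:ℝ)| = |(b:ℝ)| * δ' := mul_comm _ _
    linarith
  have hx₁x : |x₁ - x| ≤ δ/2 := by
    rw [abs_le, hx₁def]
    constructor
    · linarith [hv₁x', hbabs', habsb, hy₀δ]
    · linarith [hv₁x, hbabs, habsb, hδ'pos]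
  set μ : ℝ := y₀ + 1/(1+δ') with hμdef
  clear_value μ
  have h1δ' : (0:ℝ) < 1 + δ' := by linarith
  have hμpos : 0 < μ := by rw [hμdef]; positivity
  have hμ1 : μ < 1 := by
    have : 1/(1+δ') ≤ 1 - δ'/2 := by
      rw [div_le_iff₀ h1δ']; nlinarith
    rw [hμdef]; linarith
  set A : Fin 2 → ℝ := ![x₁, ε*(1+δ')] with hA
  clear_value A
  have hA0 : A 0 = x₁ := by rw [hA]; rfl
  have hA1 : A 1 = ε*(1+δ') := by rw [hA]; rfl
  have hAint : A ∈ interior P := by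
    apply hball
    rw [Metric.mem_ball, dist_pi_lt_iff hδpos]
    refine Fin.forall_fin_two.mpr ⟨?_, ?_⟩
    · rw [Real.dist_eq, hA0, ← hx]
      exact lt_of_le_of_lt hx₁x (by linarith)
    · rw [Real.dist_eq, hA1, hq1]
      have h : ε*(1+δ') - ε = ε*δ' := by ring
      rw [h, abs_mul, hεabs, one_mul, abs_of_pos hδ'pos]
      linarith
  set s₁ : Fin 2 → ℝ := ![v₁, 0] with hs₁def
  clear_value s₁
  have hs₁0 : s₁ 0 = v₁ := by rw [hs₁def]; rfl
  have hs₁1 : s₁ 1 = 0 := by rw [hs₁def]; rfl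
  set s₂ : Fin 2 → ℝ := ![v₂, 0] with hs₂def
  clear_value s₂
  have hs₂0 : s₂ 0 = v₂ := by rw [hs₂def]; rfl
  have hs₂1 : s₂ 1 = 0 := by rw [hs₂def]; rfl
  have hs₁ : s₁ ∈ P := by rw [hs₁def]; exact hS (memSeg a v₁ ha hv₁l (by linarith))
  have hs₂ : s₂ ∈ P := by rw [hs₂def]; exact hS (memSeg a v₂ ha hv₂l hv₂r)
  have hB₁ : y₀ • A + (1-y₀) • s₁ ∈ interior P :=
    hP.combo_interior_self_mem_interior hAint hs₁ hy₀pos h1y.le (by ring)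
  have hB₂ : y₀ • A + (1-y₀) • s₂ ∈ interior P :=
    hP.combo_interior_self_mem_interior hAint hs₂ hy₀pos h1y.le (by ring)
  have hAp : μ • A + (1-μ) • s₁ ∈ interior P :=
    hP.combo_interior_self_mem_interior hAint hs₁ hμpos (by linarith) (by ring)
  set t : ℝ := y₀*x₁ + (1-y₀)*v₁ with ht
  clear_value t
  set hh : ℝ := y₀*(1+δ') with hhh
  clear_value hh
  have hcomp : ∀ (c d : ℝ) (u v : Fin 2 → ℝ) (i : Fin 2), (c • u + d • v) i = c * u i + d * v i :=
    fun _ _ _ _ _ => rfl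
  have ext2 : ∀ (f g : Fin 2 → ℝ), f 0 = g 0 → f 1 = g 1 → f = g := by
    intro f g h0 h1
    funext i
    fin_cases i
    · exact h0
    · exact h1
  have eqB₁ : y₀ • A + (1-y₀) • s₁ = ![t, ε*hh] := by
    refine ext2 _ _ ?_ ?_
    · rw [hcomp, hA0, hs₁0]
      show _ = t
      rw [ht]
    · rw [hcomp, hA1, hs₁1]
      show _ = ε * hh
      rw [hhh]; ring
  have eqB₂ : y₀ • A + (1-y₀) • s₂ = ![t+1, ε*hh] := by
    refine ext2 _ _ ?_ ?_
    · rw [hcomp, hA0, hs₂0]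
      show _ = t + 1
      rw [ht, hv₂def]
      field_simp
      ring
    · rw [hcomp, hA1, hs₂1]
      show _ = ε * hh
      rw [hhh]; ring
  have eqAp : μ • A + (1-μ) • s₁ = ![t+(b:ℝ), ε*(hh+1)] := by
    refine ext2 _ _ ?_ ?_
    · rw [hcomp, hA0, hs₁0]
      show _ = t + (b:ℝ)
      rw [ht, hμdef, hx₁def]
      field_simp
      ring
    · rw [hcomp, hA1, hs₁1]
      show _ = ε * (hh + 1)
      rw [hμdef, hhh]
      field_simp
      ring
  -- assemble the unimodular copy
  have hcopy := unimodTriangle b e he t hh ε hee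
  apply hfree _ hcopy
  refine (convexHull_min ?_ hP.interior).trans interior_subset_intrinsicInterior
  rintro z (rfl | rfl | rfl)
  · exact eqB₁ ▸ hB₁
  · exact eqB₂ ▸ hB₂
  · exact eqAp ▸ hAp

set_option maxHeartbeats 1000000 in
/-- For an ℝ-`Δ₂`-free polygon with rational diameter `l = 1 + 2a > 1` achieved by the
horizontal segment `conv{(-a,0), (1+a,0)}`, the interior of `P` misses every segment
`conv{(b-a, ±1), (b+a, ±1)}` with `b ∈ ℤ`; in particular if `a ≥ 1/2` then `P` lies in the
strip `{-1 ≤ y ≤ 1}` and has lattice width at most 2. -/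
theorem free_polygon_forbidden_segments (P : Set (Fin 2 → ℝ))
    (hPpoly : IsPolytope P) (hPfull : affineSpan ℝ P = ⊤)
    (hfree : IsFree Set.univ stdSimplex2 P)
    (a : ℝ) (ha : 0 < a)
    (hS : convexHull ℝ {![-a, 0], ![1 + a, 0]} ⊆ P)
    (hdiam : ∀ (p : Fin 2 → ℝ) (w : Fin 2 → ℤ) (l' : ℝ),
      Int.gcd (w 0) (w 1) = 1 → 1 + 2 * a < l' →
      ¬ convexHull ℝ {p, p + l' • (fun i => (w i : ℝ))} ⊆ P) :
    (∀ (b : ℤ) (ε : ℝ), (ε = 1 ∨ ε = -1) →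
      interior P ∩ convexHull ℝ {![(b : ℝ) - a, ε], ![(b : ℝ) + a, ε]} = ∅) ∧
    ((1/2 : ℝ) ≤ a →
      P ⊆ {q : Fin 2 → ℝ | -1 ≤ q 1 ∧ q 1 ≤ 1} ∧ latticeWidth P ≤ 2) := by
  obtain ⟨F, hF, hPF⟩ := hPpoly
  have hPconv : Convex ℝ P := hPF ▸ convex_convexHull ℝ F
  have part1 : ∀ (b : ℤ) (ε : ℝ), (ε = 1 ∨ ε = -1) →
      interior P ∩ convexHull ℝ {![(b : ℝ) - a, ε], ![(b : ℝ) + a, ε]} = ∅ := by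
    intro b ε hε
    rw [eq_empty_iff_forall_notMem]
    rintro q ⟨hqint, hqseg⟩
    rw [convexHull_pair] at hqseg
    obtain ⟨u, v, hu, hv, huv, hcombo⟩ := hqseg
    have hq0 : q 0 = u * ((b:ℝ) - a) + v * ((b:ℝ) + a) := by rw [← hcombo]; rfl
    have hq1 : q 1 = ε := by
      have h : q 1 = u * ε + v * ε := by rw [← hcombo]; rfl
      rw [h, ← add_mul, huv, one_mul]
    have hu' : u = 1 - v := by linarith
    have hq0l : (b:ℝ) - a ≤ q 0 := by
      rw [hq0, hu']; linarith [mul_nonneg hv ha.le]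
    have hq0r : q 0 ≤ (b:ℝ) + a := by
      rw [hq0, hu']; linarith [mul_nonneg (by linarith : (0:ℝ) ≤ 1 - v) ha.le]
    rcases hε with rfl | rfl
    · exact key_lemma P hPconv hfree a ha hS b 1 (Or.inl rfl) 1 (by norm_num) q
        hq0l hq0r hq1 hqint
    · exact key_lemma P hPconv hfree a ha hS b (-1) (Or.inr rfl) (-1) (by norm_num) q
        hq0l hq0r hq1 hqint
  refine ⟨part1, ?_⟩
  intro ha2
  have hIntNe : (interior P).Nonempty := hPconv.interior_nonempty_iff_affineSpan_eq_top.mpr hPfull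
  have hO : (![0, 0] : Fin 2 → ℝ) ∈ P := hS (memSeg a 0 ha (by linarith) (by linarith))
  -- no interior point sits at height exactly ±1
  have hlevel : ∀ (ε : ℝ), (ε = 1 ∨ ε = -1) → ∀ w ∈ interior P, w 1 ≠ ε := by
    intro ε hε w hw hw1
    have hround := abs_sub_round (w 0)
    have h1 : (↑(round (w 0)) : ℝ) - a ≤ w 0 := by
      have := (abs_le.mp hround).1; linarith
    have h2 : w 0 ≤ (↑(round (w 0)) : ℝ) + a := by
      have := (abs_le.mp hround).2; linarith
    rcases hε with rfl | rfl
    · exact key_lemma P hPconv hfree a ha hS (round (w 0)) 1 (Or.inl rfl) 1 (by norm_num) w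
        h1 h2 hw1 hw
    · exact key_lemma P hPconv hfree a ha hS (round (w 0)) (-1) (Or.inr rfl) (-1) (by norm_num) w
        h1 h2 hw1 hw
  have hup : ∀ w ∈ interior P, w 1 < 1 := by
    intro w hw
    by_contra hcon
    push_neg at hcon
    have hwpos : 0 < w 1 := lt_of_lt_of_le one_pos hcon
    set c : ℝ := 1 / w 1 with hc
    have hcpos : 0 < c := by rw [hc]; positivity
    have hcle : c ≤ 1 := by rw [hc, div_le_one hwpos]; exact hcon
    have hm : c • w + (1 - c) • (![0, 0] : Fin 2 → ℝ) ∈ interior P :=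
      hPconv.combo_interior_self_mem_interior hw hO hcpos (by linarith) (by ring)
    have hm1 : (c • w + (1 - c) • (![0, 0] : Fin 2 → ℝ)) 1 = 1 := by
      show c * w 1 + (1 - c) * 0 = 1
      have hne : w 1 ≠ 0 := hwpos.ne'
      rw [hc]; field_simp; ring
    exact hlevel 1 (Or.inl rfl) _ hm hm1
  have hdown : ∀ w ∈ interior P, -1 < w 1 := by
    intro w hw
    by_contra hcon
    push_neg at hcon
    have hwneg : w 1 < 0 := lt_of_le_of_lt hcon (by norm_num)
    set c : ℝ := -1 / w 1 with hc
    have hcpos : 0 < c := by rw [hc]; exact div_pos_of_neg_of_neg (by norm_num) hwneg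
    have hcle : c ≤ 1 := by
      rw [hc, div_le_iff_of_neg hwneg]
      linarith
    have hm : c • w + (1 - c) • (![0, 0] : Fin 2 → ℝ) ∈ interior P :=
      hPconv.combo_interior_self_mem_interior hw hO hcpos (by linarith) (by ring)
    have hm1 : (c • w + (1 - c) • (![0, 0] : Fin 2 → ℝ)) 1 = -1 := by
      show c * w 1 + (1 - c) * 0 = -1
      have hne : w 1 ≠ 0 := hwneg.ne
      rw [hc]; field_simp; ring
    exact hlevel (-1) (Or.inr rfl) _ hm hm1
  obtain ⟨z, hz⟩ := hIntNe
  have hz1 : z 1 < 1 := hup z hz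
  have hz1' : -1 < z 1 := hdown z hz
  have hstrip : P ⊆ {q : Fin 2 → ℝ | -1 ≤ q 1 ∧ q 1 ≤ 1} := by
    intro p hp
    constructor
    · by_contra hcon
      push_neg at hcon
      set θ : ℝ := (-1 - p 1) / (z 1 - p 1) with hθ
      have hden : 0 < z 1 - p 1 := by linarith
      have hθpos : 0 < θ := by rw [hθ]; apply div_pos (by linarith) hden
      have hθlt : θ < 1 := by rw [hθ, div_lt_one hden]; linarith
      have hm : θ • z + (1 - θ) • p ∈ interior P :=
        hPconv.combo_interior_self_mem_interior hz hp hθpos (by linarith) (by ring)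
      have hm1 : (θ • z + (1 - θ) • p) 1 = -1 := by
        show θ * z 1 + (1 - θ) * p 1 = -1
        rw [hθ]; field_simp; ring
      have := hdown _ hm
      rw [hm1] at this
      exact lt_irrefl _ this
    · by_contra hcon
      push_neg at hcon
      set θ : ℝ := (p 1 - 1) / (p 1 - z 1) with hθ
      have hden : 0 < p 1 - z 1 := by linarith
      have hθpos : 0 < θ := by rw [hθ]; apply div_pos (by linarith) hden
      have hθlt : θ < 1 := by rw [hθ, div_lt_one hden]; linarith
      have hm : θ • z + (1 - θ) • p ∈ interior P :=
        hPconv.combo_interior_self_mem_interior hz hp hθpos (by linarith) (by ring)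
      have hm1 : (θ • z + (1 - θ) • p) 1 = 1 := by
        show θ * z 1 + (1 - θ) * p 1 = 1
        rw [hθ]; field_simp; ring
      have := hup _ hm
      rw [hm1] at this
      exact lt_irrefl _ this
  refine ⟨hstrip, ?_⟩
  have hsum : ∀ x : Fin 2 → ℝ, (∑ i, ((![0, 1] : Fin 2 → ℤ) i : ℝ) * x i) = x 1 := by
    intro x
    simp [Fin.sum_univ_two]
  have hbdd : BddBelow {w | ∃ u : Fin 2 → ℤ, u ≠ 0 ∧ w = widthAlong u P} := by
    refine ⟨0, ?_⟩
    rintro w ⟨u, hu, rfl⟩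
    apply Real.sSup_nonneg
    rintro r ⟨x, hx, y, hy, rfl⟩
    exact abs_nonneg _
  have hmem : widthAlong ![0, 1] P ∈ {w | ∃ u : Fin 2 → ℤ, u ≠ 0 ∧ w = widthAlong u P} :=
    ⟨![0, 1], by intro h; simpa using congrFun h 1, rfl⟩
  have hw2 : widthAlong ![0, 1] P ≤ 2 := by
    apply Real.sSup_le ?_ (by norm_num)
    rintro r ⟨x, hx, y, hy, rfl⟩
    obtain ⟨hx1, hx2⟩ := hstrip hx
    obtain ⟨hy1, hy2⟩ := hstrip hy
    rw [hsum x, hsum y, abs_le]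
    constructor <;> linarith
  exact le_trans (csInf_le hbdd hmem) hw2
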